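/- Let R be a sieve over an étale ℚ-algebra K and A ⊆ O_K any R-admissible set (i.e. −A + R_i ≠ O_K for every i). For any Følner sequence (I_N) in O_K: d̄_I({x ∈ O_K : x + A ⊆ F_R}) ≤ ∏_{i≥1} (1 − |−A + R_i|/N(𝔟_i)). Moreover, the density d_I({x : x + A ⊆ F_R}) exists and equals this product with the product strictly positive if and only if the sieve R', supported on the same ideals (𝔟_i) and defined by R'_i := −A + R_i, is Erdős and has weak light tails for (I_N). -/

import Mathlib

open Filter Topology MeasureTheory Pointwise symmDiff

noncomputable section

namespace ErdosSieve

variable {O : Type} [CommRing O]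

/-- A sieve over (the ring of integers of) an étale `ℚ`-algebra: a sequence of pairwise
coprime invertible (i.e. finite-quotient) ideals `b i` together with, for each `i`, a finite
set `gen i` of representatives, so that the sieved-out set is `R_i = gen i + b i`, which is
required to be a proper subset of the ring. -/
structure Sieve (O : Type) [CommRing O] : Type where
  b : ℕ → Ideal O
  gen : ℕ → Finset O
  coprime : ∀ i j, i ≠ j → b i ⊔ b j = ⊤
  finQuot : ∀ i, Finite (O ⧸ b i)
  ne_univ : ∀ i, (↑(gen i) : Set O) + (↑(b i) : Set O) ≠ Set.univ

/-- The `i`-th sieved-out set `R_i = gen i + b i`. -/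
def Sieve.RSet (S : Sieve O) (i : ℕ) : Set O := (↑(S.gen i) : Set O) + (↑(S.b i) : Set O)

/-- The set `F_R` of `R`-free numbers. -/
def Sieve.FR (S : Sieve O) : Set O := (⋃ i, S.RSet i)ᶜ

/-- The norm `N(b i)` of the `i`-th ideal. -/
def Sieve.normb (S : Sieve O) (i : ℕ) : ℕ := Nat.card (O ⧸ S.b i)

/-- The number `|R_i|` of residue classes modulo `b i` met by `R_i`. -/
def Sieve.cardR (S : Sieve O) (i : ℕ) : ℕ :=
  Nat.card ((Ideal.Quotient.mk (S.b i)) '' (S.RSet i))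

/-- A sieve is Erdős if `∑ |R_i| / N(b_i) < ∞`. -/
def Sieve.IsErdos (S : Sieve O) : Prop :=
  Summable fun i => (S.cardR i : ℝ) / (S.normb i : ℝ)

/-- A Følner sequence: finite nonempty subsets of `O` which are asymptotically
translation-invariant. -/
def IsFolner (I : ℕ → Set O) : Prop :=
  (∀ N, (I N).Finite) ∧ (∀ N, (I N).Nonempty) ∧
    ∀ x : O, Tendsto
      (fun N => (Nat.card ↥(((x + ·) '' I N) ∆ (I N)) : ℝ) / (Nat.card ↥(I N) : ℝ))
      atTop (𝓝 0)

/-- Upper density along a (Følner) sequence. -/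
def upperDensity (I : ℕ → Set O) (A : Set O) : ℝ :=
  limsup (fun N => (Nat.card ↥(A ∩ I N) : ℝ) / (Nat.card ↥(I N) : ℝ)) atTop

/-- `A` has density `d` along the sequence `I`. -/
def HasDensity (I : ℕ → Set O) (A : Set O) (d : ℝ) : Prop :=
  Tendsto (fun N => (Nat.card ↥(A ∩ I N) : ℝ) / (Nat.card ↥(I N) : ℝ)) atTop (𝓝 d)

/-- `⋃_{i ≥ L} R i`. -/
def unionGe (R : ℕ → Set O) (L : ℕ) : Set O := ⋃ i, ⋃ (_ : L ≤ i), R i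

/-- `⋃_{i < L} R i`. -/
def unionLt (R : ℕ → Set O) (L : ℕ) : Set O := ⋃ i, ⋃ (_ : i < L), R i

/-- The weak light tails property for a family of sieved-out sets:
`limsup`-density of `⋃_{i ≥ L} R_i ∖ ⋃_{j < L} R_j` tends to `0` as `L → ∞`. -/
def WeakLightTailsFam (I : ℕ → Set O) (R : ℕ → Set O) : Prop :=
  Tendsto (fun L => upperDensity I (unionGe R L \ unionLt R L)) atTop (𝓝 0)

/-- The strong light tails property for a family of sieved-out sets. -/
def StrongLightTailsFam (I : ℕ → Set O) (R : ℕ → Set O) : Prop :=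
  Tendsto (fun L => upperDensity I (unionGe R L)) atTop (𝓝 0)

/-- A sieve has weak light tails for `I` if it is Erdős and the tail differences have
vanishing upper density. -/
def Sieve.HasWeakLightTails (S : Sieve O) (I : ℕ → Set O) : Prop :=
  S.IsErdos ∧ WeakLightTailsFam I S.RSet

/-- A sieve has strong light tails for `I` if it is Erdős and the tails have vanishing
upper density. -/
def Sieve.HasStrongLightTails (S : Sieve O) (I : ℕ → Set O) : Prop :=
  S.IsErdos ∧ StrongLightTailsFam I S.RSet

/-- The infinite product `∏_i (1 - |R_i|/N(b_i))`, realized as the infimum of the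
(nonincreasing) sequence of partial products, i.e. as its limit. -/
def Sieve.prodDensity (S : Sieve O) : ℝ :=
  ⨅ L : ℕ, ∏ i ∈ Finset.range L, (1 - (S.cardR i : ℝ) / (S.normb i : ℝ))

/-- `A` is an `R`-admissible set: `-A + R_i ≠ O` for all `i`. -/
def Sieve.Admissible (S : Sieve O) (A : Set O) : Prop :=
  ∀ i, -A + S.RSet i ≠ Set.univ

/-- The number `|-A + R_i|` of residue classes modulo `b i` met by `-A + R_i`. -/
def Sieve.cardShift (S : Sieve O) (A : Set O) (i : ℕ) : ℕ :=
  Nat.card ((Ideal.Quotient.mk (S.b i)) '' (-A + S.RSet i))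

/-- The infinite product `∏_i (1 - |-A + R_i|/N(b_i))` (as the infimum of the
partial products). -/
def Sieve.prodDensityShift (S : Sieve O) (A : Set O) : ℝ :=
  ⨅ L : ℕ, ∏ i ∈ Finset.range L, (1 - (S.cardShift A i : ℝ) / (S.normb i : ℝ))

/-- A subset `Y` of `O` is syndetic if finitely many translates of it cover `O`. -/
def Syndetic (Y : Set O) : Prop := ∃ C : Finset O, Y + (↑C : Set O) = Set.univ

-- Indicator of a subset of `O`, i.e. a point of the shift space `{0,1}^O`.
open Classical in
def chiSet (A : Set O) : O → Bool := fun x => if x ∈ A then true else false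

/-- The shift action `S_a(A) = A - a` on `{0,1}^O`: `χ_{A - a}(x) = χ_A (x + a)`. -/
def shiftB (a : O) (f : O → Bool) : O → Bool := fun x => f (x + a)

/-- The odometer group `G_R = ∏ i, O ⧸ b i`. -/
abbrev Sieve.GR (S : Sieve O) : Type := ∀ i : ℕ, O ⧸ S.b i

-- The map `φ_R : G_R → {0,1}^O`: `a ∈ φ_R(g)` iff `a + g i` avoids (the image of) `R_i`
-- modulo `b i` for every `i`.
open Classical in
def Sieve.phiB (S : Sieve O) (g : S.GR) : O → Bool := fun a =>
  if (∀ i, (Ideal.Quotient.mk (S.b i) a + g i) ∉ (Ideal.Quotient.mk (S.b i)) '' (S.RSet i))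
  then true else false

/-- The Mirsky measure `ν_R` on `{0,1}^O`: the pushforward under `φ_R` of the Haar
probability measure of the compact group `G_R` (each factor being finite and discrete,
and the Haar measure being normalized so that the whole group has measure `1`). -/
def Sieve.mirsky (S : Sieve O) : Measure (O → Bool) := by
  letI : ∀ i, TopologicalSpace (O ⧸ S.b i) := fun _ => ⊥
  haveI : ∀ i, DiscreteTopology (O ⧸ S.b i) := fun _ => ⟨rfl⟩
  haveI : ∀ i, Finite (O ⧸ S.b i) := S.finQuot
  haveI : ∀ i, IsTopologicalAddGroup (O ⧸ S.b i) := fun i => { }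
  letI : MeasurableSpace S.GR := borel _
  haveI : BorelSpace S.GR := ⟨rfl⟩
  exact Measure.map S.phiB (Measure.addHaarMeasure (G := S.GR) ⊤)

/-! ### Auxiliary lemmas -/

section Aux

open Set

lemma aux_ncard_inter_le_symm {B C : Set O} (S : Set O) (hB : B.Finite) (hC : C.Finite) :
    (B ∩ S).ncard ≤ (C ∩ S).ncard + (B ∆ C).ncard := by
  have h1 : B ∩ S ⊆ (C ∩ S) ∪ (B ∆ C) := by
    intro y ⟨hyB, hyS⟩
    by_cases hyC : y ∈ C
    · exact Or.inl ⟨hyC, hyS⟩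
    · exact Or.inr (Or.inl ⟨hyB, hyC⟩)
  calc (B ∩ S).ncard ≤ ((C ∩ S) ∪ (B ∆ C)).ncard :=
        Set.ncard_le_ncard h1 (((hC.inter_of_left S).union ((hB.union hC).subset
          symmDiff_subset_union)))
    _ ≤ (C ∩ S).ncard + (B ∆ C).ncard := Set.ncard_union_le _ _

lemma aux_image_inter_preimage (b : Ideal O) (I : Set O) (x : O) (c : O ⧸ b) :
    ((x + ·) '' I) ∩ (Ideal.Quotient.mk b) ⁻¹' {c + Ideal.Quotient.mk b x}
      = (x + ·) '' (I ∩ (Ideal.Quotient.mk b) ⁻¹' {c}) := by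
  ext y
  simp only [Set.mem_inter_iff, Set.mem_image, Set.mem_preimage, Set.mem_singleton_iff]
  constructor
  · rintro ⟨⟨t, ht, rfl⟩, hq⟩
    refine ⟨t, ⟨ht, ?_⟩, rfl⟩
    rw [map_add, add_comm] at hq
    exact add_right_cancel hq
  · rintro ⟨t, ⟨ht, hq⟩, rfl⟩
    exact ⟨⟨t, ht, rfl⟩, by rw [map_add, hq, add_comm]⟩

/-- Along a Følner sequence, each fiber of the projection to a finite quotient has
density `1 / card`. -/
lemma aux_tendsto_fiber (b : Ideal O) (hb : Finite (O ⧸ b)) {I : ℕ → Set O}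
    (hI : IsFolner I) (c : O ⧸ b) :
    Tendsto (fun N => (((I N) ∩ (Ideal.Quotient.mk b) ⁻¹' {c}).ncard : ℝ) / ((I N).ncard : ℝ))
      atTop (𝓝 (1 / (Nat.card (O ⧸ b) : ℝ))) := by
  classical
  haveI := hb
  haveI : Fintype (O ⧸ b) := Fintype.ofFinite _
  obtain ⟨hfin, hne, hfol⟩ := hI
  set q : O → O ⧸ b := ⇑(Ideal.Quotient.mk b) with hq
  -- choose representatives
  choose rep hrep using Ideal.Quotient.mk_surjective (I := b)
  set f : O ⧸ b → ℕ → ℝ :=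
    fun d N => (((I N) ∩ q ⁻¹' {d}).ncard : ℝ) / ((I N).ncard : ℝ) with hf
  set δ : O → ℕ → ℝ :=
    fun x N => ((((x + ·) '' I N) ∆ (I N)).ncard : ℝ) / ((I N).ncard : ℝ) with hδ
  have hIpos : ∀ N, 0 < ((I N).ncard : ℝ) := by
    intro N
    exact_mod_cast (Set.ncard_pos (hfin N)).mpr (hne N)
  -- key estimate
  have key : ∀ (d : O ⧸ b) (N : ℕ), |f d N - f c N| ≤ δ (rep (d - c)) N := by
    intro d N
    set x := rep (d - c) with hx
    have hxc : c + q x = d := by rw [hx, hq, hrep]; abel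
    have himg : ((x + ·) '' I N) ∩ q ⁻¹' {d} = (x + ·) '' ((I N) ∩ q ⁻¹' {c}) := by
      rw [← hxc]; exact aux_image_inter_preimage b (I N) x c
    have hcard : (((x + ·) '' I N) ∩ q ⁻¹' {d}).ncard = ((I N) ∩ q ⁻¹' {c}).ncard := by
      rw [himg]; exact Set.ncard_image_of_injective _ (add_right_injective x)
    have hfinx : ((x + ·) '' I N).Finite := (hfin N).image _
    have h1 : ((I N) ∩ q ⁻¹' {d}).ncard
        ≤ ((I N) ∩ q ⁻¹' {c}).ncard + (((x + ·) '' I N) ∆ (I N)).ncard := by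
      rw [← hcard]
      have := aux_ncard_inter_le_symm (q ⁻¹' {d}) (hfin N) hfinx
      rwa [symmDiff_comm] at this
      -- symmDiff ncard symmetric
    have h2 : ((I N) ∩ q ⁻¹' {c}).ncard
        ≤ ((I N) ∩ q ⁻¹' {d}).ncard + (((x + ·) '' I N) ∆ (I N)).ncard := by
      rw [← hcard]
      exact aux_ncard_inter_le_symm (q ⁻¹' {d}) hfinx (hfin N)
    have h1' : (((I N) ∩ q ⁻¹' {d}).ncard : ℝ)
        ≤ ((I N) ∩ q ⁻¹' {c}).ncard + (((x + ·) '' I N) ∆ (I N)).ncard := by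
      exact_mod_cast h1
    have h2' : (((I N) ∩ q ⁻¹' {c}).ncard : ℝ)
        ≤ ((I N) ∩ q ⁻¹' {d}).ncard + (((x + ·) '' I N) ∆ (I N)).ncard := by
      exact_mod_cast h2
    rw [abs_sub_le_iff]
    constructor
    · rw [hf, hδ, div_sub_div_same]
      exact div_le_div_of_nonneg_right (by linarith) (hIpos N).le
    · rw [hf, hδ, div_sub_div_same]
      exact div_le_div_of_nonneg_right (by linarith) (hIpos N).le
  -- partition: the fibers sum to 1
  have hsum : ∀ N, ∑ d : O ⧸ b, f d N = 1 := by
    intro N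
    have hcards : ∑ d : O ⧸ b, ((I N) ∩ q ⁻¹' {d}).ncard = (I N).ncard := by
      set J := (hfin N).toFinset with hJ
      have hJc : (I N).ncard = J.card := Set.ncard_eq_toFinset_card _ (hfin N)
      have hfib : ∀ d, ((I N) ∩ q ⁻¹' {d}).ncard = (J.filter (fun t => q t = d)).card := by
        intro d
        rw [← Set.ncard_coe_finset]
        congr 1
        ext t
        simp [hJ, Set.Finite.mem_toFinset, Set.mem_inter_iff, and_comm]
      simp_rw [hfib, hJc]
      exact (Finset.card_eq_sum_card_fiberwise (fun x _ => Finset.mem_univ (q x))).symm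
    rw [hf]
    simp only
    rw [← Finset.sum_div, ← Nat.cast_sum, hcards, div_self (hIpos N).ne']
  set n : ℕ := Nat.card (O ⧸ b) with hn
  have hnpos : 0 < n := Nat.card_pos
  have hn0 : (n : ℝ) ≠ 0 := by exact_mod_cast hnpos.ne'
  have hkey2 : ∀ N, |(n : ℝ) * f c N - 1| ≤ ∑ d : O ⧸ b, δ (rep (d - c)) N := by
    intro N
    have heq : (n : ℝ) * f c N - 1 = ∑ d : O ⧸ b, (f c N - f d N) := by
      rw [Finset.sum_sub_distrib, hsum N, Finset.sum_const, Finset.card_univ, nsmul_eq_mul,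
        hn, Nat.card_eq_fintype_card]
    rw [heq]
    calc |∑ d : O ⧸ b, (f c N - f d N)| ≤ ∑ d : O ⧸ b, |f c N - f d N| :=
          Finset.abs_sum_le_sum_abs _ _
      _ ≤ ∑ d : O ⧸ b, δ (rep (d - c)) N := Finset.sum_le_sum fun d _ => by
            rw [abs_sub_comm]; exact key d N
  have hδ0 : Tendsto (fun N => ∑ d : O ⧸ b, δ (rep (d - c)) N) atTop (𝓝 0) := by
    have h0 : Tendsto (fun N => ∑ d : O ⧸ b, δ (rep (d - c)) N) atTop
        (𝓝 (∑ _d : O ⧸ b, (0:ℝ))) := by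
      refine tendsto_finset_sum _ fun d _ => ?_
      have := hfol (rep (d - c))
      simp_rw [Nat.card_coe_set_eq] at this
      exact this
    simpa using h0
  have hnf : Tendsto (fun N => (n:ℝ) * f c N - 1) atTop (𝓝 0) := squeeze_zero_norm hkey2 hδ0
  have hfc : Tendsto (f c) atTop (𝓝 (1 / (n:ℝ))) := by
    have h2 := (hnf.add (tendsto_const_nhds (x := (1:ℝ)) (f := (atTop : Filter ℕ)))).div_const (n:ℝ)
    simp only [zero_add] at h2
    refine h2.congr fun N => ?_
    rw [sub_add_cancel, mul_comm, mul_div_assoc, div_self hn0, mul_one]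
  exact hfc

/-- Along a Følner sequence, the preimage of any set `T` under the projection to a finite
quotient has density `T.ncard / card`. -/
lemma aux_hasDensity_preimage (b : Ideal O) (hb : Finite (O ⧸ b)) {I : ℕ → Set O}
    (hI : IsFolner I) (T : Set (O ⧸ b)) :
    HasDensity I ((Ideal.Quotient.mk b) ⁻¹' T) ((T.ncard : ℝ) / (Nat.card (O ⧸ b) : ℝ)) := by
  classical
  haveI := hb
  haveI : Fintype (O ⧸ b) := Fintype.ofFinite _
  have hsplit : ∀ N, (((Ideal.Quotient.mk b) ⁻¹' T ∩ I N).ncard : ℝ)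
      = ∑ d ∈ T.toFinset, (((I N) ∩ (Ideal.Quotient.mk b) ⁻¹' {d}).ncard : ℝ) := by
    intro N
    set J := ((hI.1 N)).toFinset with hJ
    have h1 : ((Ideal.Quotient.mk b) ⁻¹' T ∩ I N).ncard
        = (J.filter (fun t => Ideal.Quotient.mk b t ∈ T)).card := by
      rw [← Set.ncard_coe_finset]
      congr 1
      ext t
      simp [hJ, Set.Finite.mem_toFinset, and_comm]
    have h2 : (J.filter (fun t => Ideal.Quotient.mk b t ∈ T)).card
        = ∑ d ∈ T.toFinset, ((J.filter (fun t => Ideal.Quotient.mk b t ∈ T)).filter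
            (fun t => Ideal.Quotient.mk b t = d)).card := by
      refine Finset.card_eq_sum_card_fiberwise ?_
      intro x hx
      rw [Finset.mem_coe, Finset.mem_filter] at hx
      rw [Finset.mem_coe, Set.mem_toFinset]
      exact hx.2
    have h3 : ∀ d ∈ T.toFinset, ((J.filter (fun t => Ideal.Quotient.mk b t ∈ T)).filter
        (fun t => Ideal.Quotient.mk b t = d)).card
        = (((I N) ∩ (Ideal.Quotient.mk b) ⁻¹' {d}).ncard) := by
      intro d hd
      rw [Set.mem_toFinset] at hd
      rw [← Set.ncard_coe_finset]
      congr 1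
      ext t
      simp only [Finset.coe_filter, Set.mem_setOf_eq, Finset.mem_filter, hJ,
        Set.Finite.mem_toFinset, Set.mem_inter_iff, Set.mem_preimage, Set.mem_singleton_iff]
      constructor
      · rintro ⟨⟨htI, -⟩, htd⟩; exact ⟨htI, htd⟩
      · rintro ⟨htI, htd⟩; exact ⟨⟨htI, htd ▸ hd⟩, htd⟩
    rw [h1, h2]
    push_cast
    exact Finset.sum_congr rfl fun d hd => by rw [h3 d hd]
  have hT : (T.ncard : ℝ) / (Nat.card (O ⧸ b) : ℝ)
      = ∑ _d ∈ T.toFinset, (1 / (Nat.card (O ⧸ b) : ℝ)) := by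
    rw [Finset.sum_const, nsmul_eq_mul, Set.ncard_eq_toFinset_card']
    ring
  rw [HasDensity, hT]
  have htend := tendsto_finset_sum (f := fun (d : O ⧸ b) N =>
      (((I N) ∩ (Ideal.Quotient.mk b) ⁻¹' {d}).ncard : ℝ) / ((I N).ncard : ℝ))
    (x := atTop) T.toFinset (fun d _ => aux_tendsto_fiber b hb hI d)
  refine htend.congr fun N => ?_
  rw [← Finset.sum_div]
  rw [Nat.card_coe_set_eq, Nat.card_coe_set_eq, hsplit N]

/-- The CRT density lemma: the complement of the first `L` saturated sieved-out sets has
density equal to the `L`-th partial product. -/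
lemma aux_hasDensity_partial (S : Sieve O) (R' : ℕ → Set O)
    (hsat : ∀ i, R' i = (Ideal.Quotient.mk (S.b i)) ⁻¹'
      ((Ideal.Quotient.mk (S.b i)) '' (R' i)))
    {I : ℕ → Set O} (hI : IsFolner I) (L : ℕ) :
    HasDensity I (unionLt R' L)ᶜ
      (∏ i ∈ Finset.range L,
        (1 - (Nat.card ((Ideal.Quotient.mk (S.b i)) '' (R' i)) : ℝ) / (S.normb i : ℝ))) := by
  classical
  haveI : ∀ i : Fin L, Finite (O ⧸ S.b i.val) := fun i => S.finQuot i
  have hco : Pairwise (Function.onFun IsCoprime fun i : Fin L => S.b i.val) := by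
    intro i j hij
    exact Ideal.isCoprime_iff_sup_eq.mpr (S.coprime i j (fun h => hij (Fin.val_injective h)))
  set bb : Ideal O := ⨅ i : Fin L, S.b i.val with hbb
  set e := Ideal.quotientInfRingEquivPiQuotient (fun i : Fin L => S.b i.val) hco with he
  haveI hfinbb : Finite (O ⧸ bb) := Finite.of_equiv _ e.toEquiv.symm
  set P : Set (∀ i : Fin L, O ⧸ S.b i.val) :=
    Set.pi Set.univ (fun i : Fin L => ((Ideal.Quotient.mk (S.b i.val)) '' (R' i.val))ᶜ) with hP
  set T : Set (O ⧸ bb) := ⇑e ⁻¹' P with hT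
  have hmk : ∀ (x : O) (i : Fin L),
      e (Ideal.Quotient.mk bb x) i = Ideal.Quotient.mk (S.b i.val) x := fun x i => rfl
  have hset : (unionLt R' L)ᶜ = (Ideal.Quotient.mk bb) ⁻¹' T := by
    ext x
    constructor
    · intro hx
      simp only [Set.mem_compl_iff, unionLt, Set.mem_iUnion, not_exists] at hx
      show e (Ideal.Quotient.mk bb x) ∈ P
      intro i _
      show e (Ideal.Quotient.mk bb x) i ∈ _ᶜ
      rw [hmk x i]
      intro hmem
      exact hx i i.isLt (by rw [hsat i]; exact hmem)
    · intro hx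
      simp only [Set.mem_compl_iff, unionLt, Set.mem_iUnion, not_exists]
      intro i hiL hmem
      have h2 : e (Ideal.Quotient.mk bb x) ∈ P := hx
      have h3 := h2 ⟨i, hiL⟩ (Set.mem_univ _)
      rw [hmk x ⟨i, hiL⟩] at h3
      exact h3 (by rw [hsat i] at hmem; exact hmem)
  have hcle : ∀ i, Nat.card ((Ideal.Quotient.mk (S.b i)) '' (R' i)) ≤ Nat.card (O ⧸ S.b i) := by
    intro i
    haveI := S.finQuot i
    rw [Nat.card_coe_set_eq, ← Set.ncard_univ (O ⧸ S.b i)]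
    exact Set.ncard_le_ncard (Set.subset_univ _) Set.finite_univ
  have hcardT : T.ncard = ∏ i : Fin L,
      (Nat.card (O ⧸ S.b i.val) - Nat.card ((Ideal.Quotient.mk (S.b i.val)) '' (R' i.val))) := by
    have h1 : T = ⇑e.toEquiv.symm '' P := (e.toEquiv.image_symm_eq_preimage P).symm
    rw [h1, Set.ncard_image_of_injective _ e.toEquiv.symm.injective]
    rw [← Nat.card_coe_set_eq, Nat.card_congr (Equiv.Set.univPi _), Nat.card_pi]
    refine Finset.prod_congr rfl fun i _ => ?_
    haveI := S.finQuot i.val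
    have := Set.ncard_add_ncard_compl ((Ideal.Quotient.mk (S.b i.val)) '' (R' i.val))
      (Set.toFinite _) (Set.toFinite _)
    simp only [Nat.card_coe_set_eq]
    omega
  have hcardbb : Nat.card (O ⧸ bb) = ∏ i : Fin L, Nat.card (O ⧸ S.b i.val) :=
    (Nat.card_congr e.toEquiv).trans Nat.card_pi
  have hd := aux_hasDensity_preimage bb hfinbb hI T
  rw [← hset] at hd
  convert hd using 1
  rw [hcardT, hcardbb]
  push_cast
  rw [← Finset.prod_div_distrib, ← Fin.prod_univ_eq_prod_range
    (fun i => (1 - (Nat.card ((Ideal.Quotient.mk (S.b i)) '' (R' i)) : ℝ) / (S.normb i : ℝ))) L]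
  refine Finset.prod_congr rfl fun i _ => ?_
  haveI := S.finQuot i.val
  have hnpos : 0 < Nat.card (O ⧸ S.b i.val) := Nat.card_pos
  have hn0 : ((Nat.card (O ⧸ S.b i.val) : ℝ)) ≠ 0 := by exact_mod_cast hnpos.ne'
  rw [Nat.cast_sub (hcle i.val)]
  rw [Sieve.normb, sub_div, div_self hn0]

lemma aux_ratio_nonneg (I : ℕ → Set O) (X : Set O) (N : ℕ) :
    0 ≤ (Nat.card ↥(X ∩ I N) : ℝ) / (Nat.card ↥(I N) : ℝ) := by positivity

lemma aux_ratio_le_one {I : ℕ → Set O} (hI : IsFolner I) (X : Set O) (N : ℕ) :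
    (Nat.card ↥(X ∩ I N) : ℝ) / (Nat.card ↥(I N) : ℝ) ≤ 1 := by
  have hfin := hI.1 N
  have hpos : 0 < ((I N).ncard : ℝ) := by
    exact_mod_cast (Set.ncard_pos hfin).mpr (hI.2.1 N)
  rw [Nat.card_coe_set_eq, Nat.card_coe_set_eq, div_le_one hpos]
  exact_mod_cast Set.ncard_le_ncard Set.inter_subset_right hfin

lemma aux_bddAbove {I : ℕ → Set O} (hI : IsFolner I) (X : Set O) :
    Filter.IsBoundedUnder (· ≤ ·) atTop
      (fun N => (Nat.card ↥(X ∩ I N) : ℝ) / (Nat.card ↥(I N) : ℝ)) :=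
  isBoundedUnder_of ⟨1, fun N => aux_ratio_le_one hI X N⟩

lemma aux_bddBelow (I : ℕ → Set O) (X : Set O) :
    Filter.IsBoundedUnder (· ≥ ·) atTop
      (fun N => (Nat.card ↥(X ∩ I N) : ℝ) / (Nat.card ↥(I N) : ℝ)) :=
  isBoundedUnder_of ⟨0, fun N => aux_ratio_nonneg I X N⟩

lemma aux_ud_mono {I : ℕ → Set O} (hI : IsFolner I) {X Y : Set O} (h : X ⊆ Y) :
    upperDensity I X ≤ upperDensity I Y := by
  refine limsup_le_limsup (Eventually.of_forall fun N => ?_)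
    ((aux_bddBelow I X).isCoboundedUnder_le) (aux_bddAbove hI Y)
  have hfin := hI.1 N
  refine div_le_div_of_nonneg_right ?_ (by positivity)
  simp only [Nat.card_coe_set_eq]
  exact_mod_cast Set.ncard_le_ncard (Set.inter_subset_inter_left _ h) (hfin.inter_of_right _)

lemma aux_weierstrass (x : ℕ → ℝ) (s : Finset ℕ) (h0 : ∀ i ∈ s, 0 ≤ x i)
    (h1 : ∀ i ∈ s, x i ≤ 1) : 1 - ∑ i ∈ s, x i ≤ ∏ i ∈ s, (1 - x i) := by
  classical
  induction s using Finset.cons_induction with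
  | empty => simp
  | cons a s ha ih =>
    rw [Finset.sum_cons, Finset.prod_cons]
    have h0a := h0 a (Finset.mem_cons_self a s)
    have h1a := h1 a (Finset.mem_cons_self a s)
    have ih' := ih (fun i hi => h0 i (Finset.mem_cons_of_mem hi))
      (fun i hi => h1 i (Finset.mem_cons_of_mem hi))
    have hsum0 : 0 ≤ ∑ i ∈ s, x i := Finset.sum_nonneg (fun i hi => h0 i (Finset.mem_cons_of_mem hi))
    have hprod0 : 0 ≤ ∏ i ∈ s, (1 - x i) :=
      Finset.prod_nonneg fun i hi => by linarith [h1 i (Finset.mem_cons_of_mem hi)]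
    rcases le_or_gt (∑ i ∈ s, x i) 1 with hle | hlt
    · nlinarith
    · nlinarith

end Aux

/-- The ring of integers of the étale `ℚ`-algebra `K 0 × ⋯ × K (m-1)`. -/
abbrev OK {m : ℕ} (K : Fin m → Type) [∀ j, Field (K j)] [∀ j, NumberField (K j)] : Type :=
  ∀ j, NumberField.RingOfIntegers (K j)

variable {m : ℕ} (K : Fin m → Type) [∀ j, Field (K j)] [∀ j, NumberField (K j)]

/-- The "ball" `B_N` in `O_K`: elements all of whose archimedean embeddings have absolute
value at most `N` (the max over embeddings of all the number-field components). -/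
def ball (N : ℕ) : Set (OK K) :=
  {x | ∀ j, ∀ φ : K j →+* ℂ,
    ‖φ (algebraMap (NumberField.RingOfIntegers (K j)) (K j) (x j))‖ ≤ N}

/-- **Pattern densities and the shifted sieve.** For any sieve `R`, any `R`-admissible set
`A` and any Følner sequence `I`: the upper density of `{x : x + A ⊆ F_R}` is at most
`∏ (1 - |-A + R_i|/N(b_i))`; and its density exists, equals this product, and the product is
positive, if and only if the shifted sieve `R'_i = -A + R_i` is Erdős with weak light tails
for `I`. -/
theorem pattern_density_iff_shifted_weakLightTails
    {m : ℕ} (hm : 0 < m) (K : Fin m → Type) [∀ j, Field (K j)]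
    [∀ j, NumberField (K j)]
    (S : Sieve (OK K)) (A : Set (OK K)) (hAdm : S.Admissible A)
    (I : ℕ → Set (OK K)) (hI : IsFolner I) :
    upperDensity I {x : OK K | ∀ a ∈ A, x + a ∈ S.FR} ≤ S.prodDensityShift A
    ∧ ((HasDensity I {x : OK K | ∀ a ∈ A, x + a ∈ S.FR} (S.prodDensityShift A)
          ∧ 0 < S.prodDensityShift A)
        ↔ ((Summable fun i => (S.cardShift A i : ℝ) / (S.normb i : ℝ))
            ∧ WeakLightTailsFam I (fun i => -A + S.RSet i))) := by
  classical
  set R' : ℕ → Set (OK K) := fun i => -A + S.RSet i with hR'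
  -- saturation of the shifted sieved-out sets
  have haddb : ∀ i (r : OK K), r ∈ R' i → ∀ z ∈ S.b i, r + z ∈ R' i := by
    intro i r hr z hz
    obtain ⟨p, hp, q, hq, rfl⟩ := hr
    obtain ⟨g, hg, w, hw, rfl⟩ := hq
    exact ⟨p, hp, g + (w + z), ⟨g, hg, w + z, (S.b i).add_mem hw hz, rfl⟩, by ring⟩
  have hsat : ∀ i, R' i = (Ideal.Quotient.mk (S.b i)) ⁻¹'
      ((Ideal.Quotient.mk (S.b i)) '' (R' i)) := by
    intro i
    refine Set.Subset.antisymm (Set.subset_preimage_image _ _) ?_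
    rintro y ⟨r, hr, hqr⟩
    have hyr : y - r ∈ S.b i := by
      rw [← Ideal.Quotient.eq] at *
      exact hqr.symm
    have := haddb i r hr (y - r) hyr
    simpa using this
  -- the pattern set is the complement of the union of the shifted sets
  have hfreeset : {x : OK K | ∀ a ∈ A, x + a ∈ S.FR} = (⋃ i, R' i)ᶜ := by
    ext x
    simp only [Set.mem_setOf_eq, Set.mem_compl_iff, Set.mem_iUnion, not_exists]
    constructor
    · intro h i hx
      obtain ⟨p, hp, q, hq, rfl⟩ := hx
      have h2 := h (-p) (by rwa [Set.mem_neg] at hp)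
      have h3 : p + q + -p = q := by ring
      rw [h3] at h2
      rw [Sieve.FR, Set.mem_compl_iff] at h2
      exact h2 (Set.mem_iUnion.mpr ⟨i, hq⟩)
    · intro h a ha
      rw [Sieve.FR, Set.mem_compl_iff]
      intro hmem
      obtain ⟨i, hi⟩ := Set.mem_iUnion.mp hmem
      exact h i ⟨-a, Set.neg_mem_neg.mpr ha, x + a, hi, by ring⟩
  -- cardinalities
  have hcR : ∀ i, S.cardShift A i
      = Nat.card ((Ideal.Quotient.mk (S.b i)) '' (R' i)) := fun i => rfl
  have hnpos : ∀ i, 0 < S.normb i := fun i => by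
    haveI := S.finQuot i
    exact Nat.card_pos
  have hcle : ∀ i, S.cardShift A i ≤ S.normb i := by
    intro i
    haveI := S.finQuot i
    rw [hcR i, Sieve.normb, Nat.card_coe_set_eq, ← Set.ncard_univ (OK K ⧸ S.b i)]
    exact Set.ncard_le_ncard (Set.subset_univ _) Set.finite_univ
  have hx0 : ∀ i, 0 ≤ (S.cardShift A i : ℝ) / (S.normb i : ℝ) := fun i => by positivity
  have hx1 : ∀ i, (S.cardShift A i : ℝ) / (S.normb i : ℝ) ≤ 1 := fun i => by
    rw [div_le_one (by exact_mod_cast hnpos i)]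
    exact_mod_cast hcle i
  set PL : ℕ → ℝ := fun L => ∏ i ∈ Finset.range L,
    (1 - (S.cardShift A i : ℝ) / (S.normb i : ℝ)) with hPL
  have hPL0 : ∀ L, 0 ≤ PL L := fun L =>
    Finset.prod_nonneg fun i _ => by linarith [hx1 i]
  have hPL1 : ∀ L, PL L ≤ 1 := fun L =>
    Finset.prod_le_one (fun i _ => by linarith [hx1 i]) (fun i _ => by linarith [hx0 i])
  have hPLanti : Antitone PL := antitone_nat_of_succ_le fun L => by
    rw [hPL]
    simp only
    rw [Finset.prod_range_succ]
    exact mul_le_of_le_one_right (hPL0 L) (by linarith [hx0 L])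
  have hPbdd : BddBelow (Set.range PL) := ⟨0, by rintro y ⟨L, rfl⟩; exact hPL0 L⟩
  have hPeq : S.prodDensityShift A = ⨅ L, PL L := rfl
  have hPle : ∀ L, S.prodDensityShift A ≤ PL L := fun L => hPeq ▸ ciInf_le hPbdd L
  have hPtend : Tendsto PL atTop (𝓝 (S.prodDensityShift A)) :=
    hPeq ▸ tendsto_atTop_ciInf hPLanti hPbdd
  have hPnonneg : 0 ≤ S.prodDensityShift A := hPeq ▸ le_ciInf hPL0
  -- densities of the partial free sets
  have hDL : ∀ L, HasDensity I (unionLt R' L)ᶜ (PL L) := fun L =>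
    aux_hasDensity_partial S R' hsat hI L
  -- subset and splitting facts
  have hsubc : ∀ L, (⋃ i, R' i)ᶜ ⊆ (unionLt R' L)ᶜ := by
    intro L
    refine Set.compl_subset_compl.mpr ?_
    intro x hx
    simp only [unionLt, Set.mem_iUnion] at hx
    obtain ⟨i, _, hxi⟩ := hx
    exact Set.mem_iUnion.mpr ⟨i, hxi⟩
  have hTLeq : ∀ L, unionGe R' L \ unionLt R' L = (unionLt R' L)ᶜ \ (⋃ i, R' i)ᶜ := by
    intro L
    ext x
    simp only [unionGe, unionLt, Set.mem_diff, Set.mem_compl_iff, Set.mem_iUnion, not_exists,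
      not_not, not_forall]
    constructor
    · rintro ⟨⟨i, hLi, hx⟩, hnot⟩
      exact ⟨fun j hj hxj => hnot j hj hxj, ⟨i, hx⟩⟩
    · rintro ⟨h2, h3⟩
      obtain ⟨i, hx⟩ := h3
      rcases lt_or_ge i L with hiL | hiL
      · exact absurd hx (h2 i hiL)
      · exact ⟨⟨i, hiL, hx⟩, h2⟩
  have hsplit : ∀ L N, Nat.card ↥((unionLt R' L)ᶜ ∩ I N)
      = Nat.card ↥((⋃ i, R' i)ᶜ ∩ I N)
        + Nat.card ↥((unionGe R' L \ unionLt R' L) ∩ I N) := by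
    intro L N
    rw [hTLeq L]
    simp only [Nat.card_coe_set_eq]
    have hdecomp : (unionLt R' L)ᶜ ∩ I N
        = ((⋃ i, R' i)ᶜ ∩ I N) ∪ (((unionLt R' L)ᶜ \ (⋃ i, R' i)ᶜ) ∩ I N) := by
      ext x
      have := hsubc L
      constructor
      · rintro ⟨hxG, hxI⟩
        by_cases hxF : x ∈ (⋃ i, R' i)ᶜ
        · exact Or.inl ⟨hxF, hxI⟩
        · exact Or.inr ⟨⟨hxG, hxF⟩, hxI⟩
      · rintro (⟨hxF, hxI⟩ | ⟨⟨hxG, _⟩, hxI⟩)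
        · exact ⟨this hxF, hxI⟩
        · exact ⟨hxG, hxI⟩
    rw [hdecomp]
    refine Set.ncard_union_eq ?_ ((hI.1 N).inter_of_right _) ((hI.1 N).inter_of_right _)
    refine Set.disjoint_left.mpr ?_
    rintro x ⟨hxF, -⟩ ⟨⟨-, hxF'⟩, -⟩
    exact hxF' hxF
  have hsplitR : ∀ L N, (Nat.card ↥((unionLt R' L)ᶜ ∩ I N) : ℝ) / (Nat.card ↥(I N) : ℝ)
      = (Nat.card ↥((⋃ i, R' i)ᶜ ∩ I N) : ℝ) / (Nat.card ↥(I N) : ℝ)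
        + (Nat.card ↥((unionGe R' L \ unionLt R' L) ∩ I N) : ℝ) / (Nat.card ↥(I N) : ℝ) := by
    intro L N
    rw [← add_div]
    congr 1
    exact_mod_cast hsplit L N
  -- Part 1 : the upper-density bound
  have hud1 : upperDensity I (⋃ i, R' i)ᶜ ≤ S.prodDensityShift A := by
    rw [hPeq]
    refine le_ciInf fun L => ?_
    have h1 := aux_ud_mono hI (hsubc L)
    exact h1.trans_eq ((hDL L).limsup_eq)
  constructor
  · rw [hfreeset]
    exact hud1
  constructor
  · -- forward direction
    rintro ⟨hD, hpos⟩
    rw [hfreeset] at hD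
    constructor
    · -- summability
      refine summable_of_sum_range_le (fun i => hx0 i)
        (c := -Real.log (S.prodDensityShift A)) (fun L => ?_)
      have h2 : PL L ≤ Real.exp (-∑ i ∈ Finset.range L,
          (S.cardShift A i : ℝ) / (S.normb i : ℝ)) := by
        rw [← Finset.sum_neg_distrib, Real.exp_sum]
        refine Finset.prod_le_prod (fun i _ => by linarith [hx1 i]) (fun i _ => ?_)
        have h3 := Real.add_one_le_exp (-((S.cardShift A i : ℝ) / (S.normb i : ℝ)))
        linarith
      have h4 := Real.log_le_log hpos ((hPle L).trans h2)
      rw [Real.log_exp] at h4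
      linarith
    · -- weak light tails
      have hDT : ∀ L, HasDensity I (unionGe R' L \ unionLt R' L)
          (PL L - S.prodDensityShift A) := by
        intro L
        refine ((hDL L).sub hD).congr fun N => ?_
        rw [hsplitR L N]
        ring
      show Tendsto (fun L => upperDensity I (unionGe R' L \ unionLt R' L)) atTop (𝓝 0)
      have heq : (fun L => upperDensity I (unionGe R' L \ unionLt R' L))
          = fun L => PL L - S.prodDensityShift A := funext fun L => (hDT L).limsup_eq
      rw [heq]
      have h6 := hPtend.sub (tendsto_const_nhds (x := S.prodDensityShift A))
      simpa using h6
  · -- reverse direction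
    rintro ⟨hSum, hWLT⟩
    have hclt : ∀ i, S.cardShift A i < S.normb i := by
      intro i
      haveI := S.finQuot i
      have hne : (Ideal.Quotient.mk (S.b i)) '' (R' i) ≠ Set.univ := by
        intro hequ
        refine hAdm i ?_
        have h7 : R' i = Set.univ := by rw [hsat i, hequ, Set.preimage_univ]
        exact h7
      rw [hcR i, Sieve.normb, Nat.card_coe_set_eq, ← Set.ncard_univ (OK K ⧸ S.b i)]
      exact Set.ncard_lt_ncard (Set.ssubset_univ_iff.mpr hne) Set.finite_univ
    have hxlt : ∀ i, (S.cardShift A i : ℝ) / (S.normb i : ℝ) < 1 := fun i =>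
      (div_lt_one (by exact_mod_cast hnpos i)).mpr (by exact_mod_cast hclt i)
    obtain ⟨L0, hL0⟩ : ∃ L0, ∀ L, L0 ≤ L →
        ∑ i ∈ Finset.Ico L0 L, (S.cardShift A i : ℝ) / (S.normb i : ℝ) ≤ 1/2 := by
      have ht := hSum.hasSum.tendsto_sum_nat
      rw [Metric.tendsto_atTop] at ht
      obtain ⟨L0, h⟩ := ht (1/4) (by norm_num)
      refine ⟨L0, fun L hL => ?_⟩
      rw [Finset.sum_Ico_eq_sub _ hL]
      have h1 := h L hL
      have h2 := h L0 le_rfl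
      rw [Real.dist_eq, abs_lt] at h1 h2
      linarith [h1.1, h1.2, h2.1, h2.2]
    have hPL0pos : 0 < PL L0 := Finset.prod_pos fun i _ => by linarith [hxlt i]
    have hPLlow : ∀ L, PL L0 / 2 ≤ PL L := by
      intro L
      rcases le_or_gt L L0 with h | h
      · linarith [hPLanti h]
      · have hprod : PL L0 * ∏ i ∈ Finset.Ico L0 L,
            (1 - (S.cardShift A i : ℝ) / (S.normb i : ℝ)) = PL L :=
          Finset.prod_range_mul_prod_Ico _ h.le
        have hw := aux_weierstrass (fun i => (S.cardShift A i : ℝ) / (S.normb i : ℝ))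
          (Finset.Ico L0 L) (fun i _ => hx0 i) (fun i _ => hx1 i)
        have hts := hL0 L h.le
        calc PL L0 / 2 = PL L0 * (1/2) := by ring
          _ ≤ PL L0 * (1 - ∑ i ∈ Finset.Ico L0 L,
              (S.cardShift A i : ℝ) / (S.normb i : ℝ)) :=
            mul_le_mul_of_nonneg_left (by linarith) hPL0pos.le
          _ ≤ PL L0 * ∏ i ∈ Finset.Ico L0 L,
              (1 - (S.cardShift A i : ℝ) / (S.normb i : ℝ)) :=
            mul_le_mul_of_nonneg_left hw hPL0pos.le
          _ = PL L := hprod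
    have hPpos : 0 < S.prodDensityShift A :=
      lt_of_lt_of_le (by positivity) (hPeq ▸ le_ciInf hPLlow)
    refine ⟨?_, hPpos⟩
    rw [hfreeset]
    show Tendsto (fun N => (Nat.card ↥((⋃ i, R' i)ᶜ ∩ I N) : ℝ) / (Nat.card ↥(I N) : ℝ))
      atTop (𝓝 (S.prodDensityShift A))
    refine tendsto_of_le_liminf_of_limsup_le ?_ hud1 (aux_bddAbove hI _) (aux_bddBelow I _)
    refine le_of_forall_pos_le_add fun ε hε => ?_
    obtain ⟨L, hL⟩ := (hWLT.eventually_lt_const (show (0:ℝ) < ε/2 by positivity)).exists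
    have hev1 : ∀ᶠ N in atTop,
        (Nat.card ↥((unionGe R' L \ unionLt R' L) ∩ I N) : ℝ) / (Nat.card ↥(I N) : ℝ)
          < ε/2 :=
      eventually_lt_of_limsup_lt hL (aux_bddAbove hI _)
    have hev2 : ∀ᶠ N in atTop, PL L - ε/2
        < (Nat.card ↥((unionLt R' L)ᶜ ∩ I N) : ℝ) / (Nat.card ↥(I N) : ℝ) :=
      (hDL L).eventually_const_lt (by linarith [hε])
    have hev : ∀ᶠ N in atTop, S.prodDensityShift A - ε
        ≤ (Nat.card ↥((⋃ i, R' i)ᶜ ∩ I N) : ℝ) / (Nat.card ↥(I N) : ℝ) := by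
      filter_upwards [hev1, hev2] with N h1 h2
      have h5 := hsplitR L N
      have hPleL := hPle L
      linarith
    have hlim := le_liminf_of_le ((aux_bddAbove hI _).isCoboundedUnder_ge) hev
    linarith

end ErdosSieve
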